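/- Let p ≥ 1 and L ≥ 1, and let v_0, v_1, …, v_L be independent random vectors in ℝ^p on a common probability space, each of which is zero-mean and isotropic. Set v̄_i := (1, v_iᵀ)ᵀ ∈ ℝ^{p+1} and define ũ := (v_0ᵀ, v_1ᵀ, (v̄_1 ⊗ v_2)ᵀ, (v̄_1 ⊗ v̄_2 ⊗ v_3)ᵀ, …, (v̄_1 ⊗ v̄_2 ⊗ ⋯ ⊗ v̄_{L−1} ⊗ v_L)ᵀ)ᵀ ∈ ℝ^{d_ũ}, with d_ũ := (p+1)^L + p − 1. Then E[ũũᵀ] = I_{d_ũ}; equivalently, E[(ũᵀw)²] = ‖w‖²₂ for every w ∈ ℝ^{d_ũ}. -/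

import Mathlib

open MeasureTheory ProbabilityTheory Real
open scoped ENNReal RealInnerProductSpace BigOperators

def Isotropic {Ω : Type*} [MeasurableSpace Ω] {p : ℕ}
    (u : Ω → EuclideanSpace ℝ (Fin p)) (μ : Measure Ω) : Prop :=
  ∀ x : EuclideanSpace ℝ (Fin p), (∫ ω, ⟪u ω, x⟫ ^ 2 ∂μ) = ‖x‖ ^ 2

def Hypercontractive {Ω : Type*} [MeasurableSpace Ω] {p : ℕ} (γ : ℝ)
    (u : Ω → EuclideanSpace ℝ (Fin p)) (μ : Measure Ω) : Prop :=
  ∀ x : EuclideanSpace ℝ (Fin p),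
    (∫ ω, ⟪u ω, x⟫ ^ 4 ∂μ) ≤ γ * (∫ ω, ⟪u ω, x⟫ ^ 2 ∂μ) ^ 2

def ZeroThirdMoment {Ω : Type*} [MeasurableSpace Ω] {p : ℕ}
    (u : Ω → EuclideanSpace ℝ (Fin p)) (μ : Measure Ω) : Prop :=
  ∀ x : EuclideanSpace ℝ (Fin p), (∫ ω, ⟪u ω, x⟫ ^ 3 ∂μ) = 0

/-- `ū = (1, uᵀ)ᵀ ∈ ℝ^{p+1}`. -/
noncomputable def baru {p : ℕ} (u : EuclideanSpace ℝ (Fin p)) : Fin (p + 1) → ℝ :=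
  Fin.cons 1 (fun i => u i)

/-- index type for the covariate vector `ũ`, of cardinality `(p+1)^L + p − 1`:
`Sum.inl` indexes the block `v_0`, and `Sum.inr ⟨ℓ, is, j⟩` indexes the entry of the
block `v̄_1 ⊗ ⋯ ⊗ v̄_ℓ ⊗ v_{ℓ+1}` with multi-index `(is, j)` (`ℓ = 0, …, L−1`). -/
abbrev CovIdx (p L : ℕ) := Fin p ⊕ (Σ ℓ : Fin L, (Fin ℓ.val → Fin (p + 1)) × Fin p)

/-- the covariate vector
`ũ = (v_0ᵀ, v_1ᵀ, (v̄_1⊗v_2)ᵀ, …, (v̄_1⊗⋯⊗v̄_{L−1}⊗v_L)ᵀ)ᵀ ∈ ℝ^{d_ũ}`. -/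
noncomputable def covariate {p : ℕ} (L : ℕ) (v : ℕ → EuclideanSpace ℝ (Fin p)) :
    EuclideanSpace ℝ (CovIdx p L) :=
  WithLp.toLp 2 fun c =>
    match c with
    | Sum.inl j => v 0 j
    | Sum.inr ⟨ℓ, is, j⟩ =>
        (∏ s : Fin ℓ.val, baru (v (s.val + 1)) (is s)) * v (ℓ.val + 1) j

set_option linter.unusedSectionVars false
set_option maxHeartbeats 1000000
set_option synthInstance.maxHeartbeats 400000

section Helpers
variable {Ω : Type*} [MeasurableSpace Ω] {μ : Measure Ω} [IsProbabilityMeasure μ] {p : ℕ}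
variable {u : Ω → EuclideanSpace ℝ (Fin p)}

lemma coord_meas (hu : Measurable u) (i : Fin p) : Measurable fun ω => u ω i :=
  (measurable_pi_apply i).comp ((WithLp.measurable_ofLp 2 _).comp hu)

lemma iso_sq (hiso : Isotropic u μ) (i : Fin p) : (∫ ω, u ω i * u ω i ∂μ) = 1 := by
  have := hiso (EuclideanSpace.single i (1:ℝ))
  simp [EuclideanSpace.inner_single_right, sq] at this
  simpa using this

lemma iso_sq_int (hiso : Isotropic u μ) (i : Fin p) :
    Integrable (fun ω => u ω i * u ω i) μ := by
  by_contra h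
  have := iso_sq (μ := μ) hiso i
  rw [integral_undef h] at this
  norm_num at this

lemma coord_int (hu : Measurable u) (hiso : Isotropic u μ) (i : Fin p) :
    Integrable (fun ω => u ω i) μ := by
  have h2 : MemLp (fun ω => u ω i) 2 μ := by
    rw [memLp_two_iff_integrable_sq (coord_meas hu i).aestronglyMeasurable]
    simpa [sq] using iso_sq_int (μ := μ) hiso i
  exact h2.integrable (by norm_num)

lemma iso_pair_sum (hiso : Isotropic u μ) {i j : Fin p} (hij : i ≠ j) :
    (∫ ω, (u ω i + u ω j) * (u ω i + u ω j) ∂μ) = 2 := by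
  have h := hiso (EuclideanSpace.single i (1:ℝ) + EuclideanSpace.single j (1:ℝ))
  have h1 : ∀ ω, ⟪u ω, EuclideanSpace.single i (1:ℝ) + EuclideanSpace.single j (1:ℝ)⟫
      = u ω i + u ω j := by
    intro ω
    rw [inner_add_right, EuclideanSpace.inner_single_right, EuclideanSpace.inner_single_right]
    simp
  have h2 : ‖EuclideanSpace.single i (1:ℝ) + EuclideanSpace.single j (1:ℝ)‖ ^ 2 = 2 := by
    rw [norm_add_sq_real, EuclideanSpace.inner_single_left]
    simp [EuclideanSpace.single_apply, hij]
    norm_num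
  simp only [h1, h2, sq] at h
  exact h

lemma iso_pair_sum_int (hiso : Isotropic u μ) {i j : Fin p} (hij : i ≠ j) :
    Integrable (fun ω => (u ω i + u ω j) * (u ω i + u ω j)) μ := by
  by_contra h
  have := iso_pair_sum (μ := μ) hiso hij
  rw [integral_undef h] at this
  norm_num at this

lemma iso_cross_int (hiso : Isotropic u μ) {i j : Fin p} (hij : i ≠ j) :
    Integrable (fun ω => u ω i * u ω j) μ := by
  have h1 : Integrable (fun ω => (u ω i + u ω j) * (u ω i + u ω j) - u ω i * u ω i) μ :=
    (iso_pair_sum_int hiso hij).sub (iso_sq_int hiso i)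
  have h2 : Integrable (fun ω =>
      ((u ω i + u ω j) * (u ω i + u ω j) - u ω i * u ω i) - u ω j * u ω j) μ :=
    h1.sub (iso_sq_int hiso j)
  have h3 : Integrable (fun ω =>
      (((u ω i + u ω j) * (u ω i + u ω j) - u ω i * u ω i) - u ω j * u ω j) / 2) μ :=
    h2.div_const 2
  refine h3.congr (Filter.Eventually.of_forall fun ω => ?_)
  ring

lemma iso_cross (hiso : Isotropic u μ) {i j : Fin p} (hij : i ≠ j) :
    (∫ ω, u ω i * u ω j ∂μ) = 0 := by
  have hint : Integrable (fun ω => u ω i * u ω j) μ := iso_cross_int hiso hij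
  have hc2 : Integrable (fun ω => 2 * (u ω i * u ω j)) μ := hint.const_mul 2
  have hA : Integrable (fun ω => u ω i * u ω i + 2 * (u ω i * u ω j)) μ :=
    (iso_sq_int hiso i).add hc2
  have key : (∫ ω, (u ω i + u ω j) * (u ω i + u ω j) ∂μ)
      = 1 + 2 * (∫ ω, u ω i * u ω j ∂μ) + 1 := by
    have e : (fun ω => (u ω i + u ω j) * (u ω i + u ω j))
        = fun ω => (u ω i * u ω i + 2 * (u ω i * u ω j)) + u ω j * u ω j := by
      funext ω; ring
    rw [e, integral_add hA (iso_sq_int hiso j),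
      integral_add (iso_sq_int hiso i) hc2, integral_const_mul, iso_sq hiso i, iso_sq hiso j]
  rw [iso_pair_sum hiso hij] at key
  linarith

/-- second moments of coordinates -/
lemma coord_mom2 (hiso : Isotropic u μ) (i j : Fin p) :
    (∫ ω, u ω i * u ω j ∂μ) = if i = j then 1 else 0 := by
  by_cases h : i = j
  · subst h; simp [iso_sq hiso i]
  · simp [h, iso_cross hiso h]

lemma coord_mom2_int (hiso : Isotropic u μ) (i j : Fin p) :
    Integrable (fun ω => u ω i * u ω j) μ := by
  by_cases h : i = j
  · subst h; exact iso_sq_int hiso i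
  · exact iso_cross_int hiso h

lemma integrable_vec_aux (hu : Measurable u) (hiso : Isotropic u μ) :
    Integrable (fun ω (i : Fin p) => u ω i) μ := by
  have hb : Integrable (fun ω => ∑ i : Fin p, |u ω i|) μ :=
    integrable_finset_sum _ fun i _ => (coord_int hu hiso i).abs
  refine hb.mono' ?_ ?_
  · exact (measurable_pi_lambda _ fun i => coord_meas hu i).aestronglyMeasurable
  · filter_upwards with ω
    rw [pi_norm_le_iff_of_nonneg (Finset.sum_nonneg fun i _ => abs_nonneg _)]
    intro i
    simpa [Real.norm_eq_abs] using Finset.single_le_sum (f := fun j => |u ω j|)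
      (fun j _ => abs_nonneg _) (Finset.mem_univ i)

lemma integrable_vec (hu : Measurable u) (hiso : Isotropic u μ) : Integrable u μ :=
  (ContinuousLinearEquiv.integrable_comp_iff (φ := fun ω (i : Fin p) => u ω i)
    ((EuclideanSpace.equiv (Fin p) ℝ).symm)).2 (integrable_vec_aux hu hiso)

lemma coord_mean (hu : Measurable u) (hiso : Isotropic u μ)
    (hmean : (∫ ω, u ω ∂μ) = 0) (i : Fin p) : (∫ ω, u ω i ∂μ) = 0 := by
  have h := (EuclideanSpace.proj (𝕜 := ℝ) i).integral_comp_comm (integrable_vec hu hiso)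
  simp only [hmean, map_zero] at h
  simpa using h

/-- `baru` coordinates are measurable. -/
lemma baru_meas (k : Fin (p + 1)) :
    Measurable fun x : EuclideanSpace ℝ (Fin p) => baru x k := by
  refine Fin.cases ?_ ?_ k
  · simp only [baru, Fin.cons_zero]
    exact measurable_const
  · intro i
    simp only [baru, Fin.cons_succ]
    exact (measurable_pi_apply i).comp (WithLp.measurable_ofLp 2 _)

lemma baru_pair_int (hu : Measurable u) (hiso : Isotropic u μ) (k k' : Fin (p + 1)) :
    Integrable (fun ω => baru (u ω) k * baru (u ω) k') μ := by
  induction k using Fin.cases with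
  | zero =>
    simp only [baru, Fin.cons_zero, one_mul]
    induction k' using Fin.cases with
    | zero => simp only [Fin.cons_zero]; exact integrable_const 1
    | succ j => simp only [Fin.cons_succ]; exact coord_int hu hiso j
  | succ i =>
    induction k' using Fin.cases with
    | zero =>
      simp only [baru, Fin.cons_zero, Fin.cons_succ, mul_one]
      exact coord_int hu hiso i
    | succ j =>
      simp only [baru, Fin.cons_succ]
      exact coord_mom2_int hiso i j

lemma baru_pair (hu : Measurable u) (hiso : Isotropic u μ)
    (hmean : (∫ ω, u ω ∂μ) = 0) (k k' : Fin (p + 1)) :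
    (∫ ω, baru (u ω) k * baru (u ω) k' ∂μ) = if k = k' then 1 else 0 := by
  induction k using Fin.cases with
  | zero =>
    simp only [baru, Fin.cons_zero, one_mul]
    induction k' using Fin.cases with
    | zero => simp
    | succ j =>
      simp only [Fin.cons_succ, coord_mean hu hiso hmean j]
      simp [Ne.symm (Fin.succ_ne_zero j)]
  | succ i =>
    induction k' using Fin.cases with
    | zero =>
      simp only [baru, Fin.cons_zero, Fin.cons_succ, mul_one, coord_mean hu hiso hmean i]
      simp [Fin.succ_ne_zero i]
    | succ j =>
      simp only [baru, Fin.cons_succ, coord_mom2 hiso i j]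
      simp [Fin.succ_inj]

end Helpers
/-- the index of the `baru` factor contributed by entry `a` at variable `t`. -/
def kIdx {p L : ℕ} (a : CovIdx p L) (t : ℕ) : Fin (p + 1) :=
  match a with
  | Sum.inl i => if t = 0 then i.succ else 0
  | Sum.inr ⟨ℓ, is, j⟩ =>
      if h : 1 ≤ t ∧ t ≤ ℓ.val then is ⟨t - 1, by omega⟩
      else if t = ℓ.val + 1 then j.succ else 0

lemma baru_zero {p : ℕ} (x : EuclideanSpace ℝ (Fin p)) : baru x 0 = 1 := rfl

lemma baru_succ {p : ℕ} (x : EuclideanSpace ℝ (Fin p)) (i : Fin p) :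
    baru x i.succ = x i := rfl

lemma kIdx_inl_zero {p L : ℕ} (i : Fin p) : kIdx (Sum.inl i : CovIdx p L) 0 = i.succ := by
  simp [kIdx]

lemma kIdx_inl_pos {p L : ℕ} (i : Fin p) {t : ℕ} (h : t ≠ 0) :
    kIdx (Sum.inl i : CovIdx p L) t = 0 := by
  simp [kIdx, h]

lemma kIdx_inr_mid {p L : ℕ} (ℓ : Fin L) (is : Fin ℓ.val → Fin (p + 1)) (j : Fin p)
    {t : ℕ} (h1 : 1 ≤ t) (h2 : t ≤ ℓ.val) :
    kIdx (Sum.inr ⟨ℓ, is, j⟩ : CovIdx p L) t = is ⟨t - 1, by omega⟩ := by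
  simp only [kIdx]
  rw [dif_pos ⟨h1, h2⟩]

lemma kIdx_inr_last {p L : ℕ} (ℓ : Fin L) (is : Fin ℓ.val → Fin (p + 1)) (j : Fin p) :
    kIdx (Sum.inr ⟨ℓ, is, j⟩ : CovIdx p L) (ℓ.val + 1) = j.succ := by
  simp only [kIdx]
  rw [dif_neg (by omega)]
  simp

lemma kIdx_inr_other {p L : ℕ} (ℓ : Fin L) (is : Fin ℓ.val → Fin (p + 1)) (j : Fin p)
    {t : ℕ} (h1 : ¬(1 ≤ t ∧ t ≤ ℓ.val)) (h2 : t ≠ ℓ.val + 1) :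
    kIdx (Sum.inr ⟨ℓ, is, j⟩ : CovIdx p L) t = 0 := by
  simp only [kIdx]
  rw [dif_neg h1, if_neg h2]

/-- the covariate entries factor as products of `baru` coordinates. -/
lemma covariate_eq {p : ℕ} (L : ℕ) (v : ℕ → EuclideanSpace ℝ (Fin p)) (a : CovIdx p L) :
    covariate L v a = ∏ t ∈ Finset.range (L + 1), baru (v t) (kIdx a t) := by
  match a with
  | Sum.inl i =>
    rw [Finset.prod_eq_single_of_mem 0 (Finset.mem_range.2 (Nat.succ_pos L))]
    · rw [kIdx_inl_zero, baru_succ]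
      rfl
    · intro t _ ht
      rw [kIdx_inl_pos i ht, baru_zero]
  | Sum.inr ⟨ℓ, is, j⟩ =>
    have hℓ := ℓ.isLt
    have hone : ∀ t ∈ Finset.range (L + 1), t ∉ Finset.range (ℓ.val + 2) →
        baru (v t) (kIdx (Sum.inr ⟨ℓ, is, j⟩ : CovIdx p L) t) = 1 := by
      intro t _ ht
      have ht2 : ℓ.val + 2 ≤ t := by
        simp only [Finset.mem_range, not_lt] at ht; exact ht
      rw [kIdx_inr_other ℓ is j (by omega) (by omega), baru_zero]
    rw [← Finset.prod_subset (Finset.range_subset_range.2 (by omega)) hone,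
      Finset.prod_range_succ, kIdx_inr_last, baru_succ, Finset.prod_range_succ',
      kIdx_inr_other ℓ is j (by omega) (by omega), baru_zero, mul_one]
    show (∏ s : Fin ℓ.val, baru (v (s.val + 1)) (is s)) * v (ℓ.val + 1) j = _
    congr 1
    rw [← Fin.prod_univ_eq_prod_range
      (fun t => baru (v (t + 1)) (kIdx (Sum.inr ⟨ℓ, is, j⟩ : CovIdx p L) (t + 1))) ℓ.val]
    refine Finset.prod_congr rfl fun s _ => ?_
    have hs := s.isLt
    rw [kIdx_inr_mid ℓ is j (by omega) (by omega)]
    congr 2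

/-- expectation of a product of independent real random variables. -/
lemma integral_indep_prod {ι Ω : Type*} [MeasurableSpace Ω] {μ : Measure Ω}
    [IsProbabilityMeasure μ] {f : ι → Ω → ℝ}
    (hind : iIndepFun (m := fun _ => (inferInstance : MeasurableSpace ℝ)) f μ)
    (hmeas : ∀ i, Measurable (f i)) (hint : ∀ i, Integrable (f i) μ) (S : Finset ι) :
    Integrable (fun ω => ∏ i ∈ S, f i ω) μ ∧
      (∫ ω, ∏ i ∈ S, f i ω ∂μ) = ∏ i ∈ S, ∫ ω, f i ω ∂μ := by
  classical
  induction S using Finset.cons_induction with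
  | empty => simp
  | cons i S hi ih =>
    have hIF : IndepFun (fun ω => ∏ j ∈ S, f j ω) (f i) μ := by
      have h := hind.indepFun_finsetProd_of_notMem hmeas hi
      have hprod : (∏ j ∈ S, f j) = fun ω => ∏ j ∈ S, f j ω := by
        funext ω; exact Finset.prod_apply ω S f
      rwa [hprod] at h
    have hint' : Integrable (fun ω => (∏ j ∈ S, f j ω) * f i ω) μ :=
      hIF.integrable_mul ih.1 (hint i)
    have hmul : (∫ ω, (∏ j ∈ S, f j ω) * f i ω ∂μ)
        = (∫ ω, ∏ j ∈ S, f j ω ∂μ) * ∫ ω, f i ω ∂μ :=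
      hIF.integral_mul_eq_mul_integral ih.1.aestronglyMeasurable (hint i).aestronglyMeasurable
    constructor
    · refine hint'.congr (Filter.Eventually.of_forall fun ω => ?_)
      show (∏ j ∈ S, f j ω) * f i ω = ∏ j ∈ Finset.cons i S hi, f j ω
      rw [Finset.prod_cons]
      ring
    · have h1 : (∫ ω, ∏ j ∈ Finset.cons i S hi, f j ω ∂μ)
          = ∫ ω, (∏ j ∈ S, f j ω) * f i ω ∂μ := by
        congr 1; funext ω; rw [Finset.prod_cons]; ring
      rw [h1, hmul, ih.2, Finset.prod_cons]
      ring

lemma kIdx_delta {p L : ℕ} {a b : CovIdx p L} (hab : a ≠ b) :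
    ∃ t, t ∈ Finset.range (L + 1) ∧ kIdx a t ≠ kIdx b t := by
  match a, b with
  | Sum.inl i, Sum.inl i' =>
    refine ⟨0, by simp, ?_⟩
    rw [kIdx_inl_zero, kIdx_inl_zero]
    simp only [Ne, Fin.succ_inj]
    exact fun h => hab (by rw [h])
  | Sum.inl i, Sum.inr ⟨ℓ, is, j⟩ =>
    refine ⟨0, by simp, ?_⟩
    rw [kIdx_inl_zero, kIdx_inr_other ℓ is j (by omega) (by omega)]
    exact Fin.succ_ne_zero i
  | Sum.inr ⟨ℓ, is, j⟩, Sum.inl i =>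
    refine ⟨0, by simp, ?_⟩
    rw [kIdx_inl_zero, kIdx_inr_other ℓ is j (by omega) (by omega)]
    exact (Fin.succ_ne_zero i).symm
  | Sum.inr ⟨ℓ, is, j⟩, Sum.inr ⟨ℓ', is', j'⟩ =>
    have hℓ := ℓ.isLt
    have hℓ' := ℓ'.isLt
    rcases lt_trichotomy ℓ.val ℓ'.val with hlt | heq | hgt
    · refine ⟨ℓ'.val + 1, Finset.mem_range.2 (by omega), ?_⟩
      rw [kIdx_inr_other ℓ is j (by omega) (by omega), kIdx_inr_last]
      exact (Fin.succ_ne_zero j').symm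
    · have : ℓ = ℓ' := Fin.ext heq
      subst this
      by_cases hj : j = j'
      · have his : is ≠ is' := by
          intro h
          exact hab (by rw [h, hj])
        obtain ⟨s, hs⟩ := Function.ne_iff.mp his
        have hsl := s.isLt
        refine ⟨s.val + 1, Finset.mem_range.2 (by omega), ?_⟩
        rw [kIdx_inr_mid ℓ is j (by omega) (by omega),
          kIdx_inr_mid ℓ is' j' (by omega) (by omega)]
        intro h
        apply hs
        have hfin : (⟨s.val + 1 - 1, by omega⟩ : Fin ℓ.val) = s := Fin.ext (by simp)
        rwa [hfin] at h
      · refine ⟨ℓ.val + 1, Finset.mem_range.2 (by omega), ?_⟩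
        rw [kIdx_inr_last, kIdx_inr_last]
        simpa [Fin.succ_inj] using hj
    · refine ⟨ℓ.val + 1, Finset.mem_range.2 (by omega), ?_⟩
      rw [kIdx_inr_other ℓ' is' j' (by omega) (by omega), kIdx_inr_last]
      exact Fin.succ_ne_zero j

/-- isotropy of the covariates: if `v_0, …, v_L` are independent,
zero-mean and isotropic, then `E[ũũᵀ] = I`; equivalently `E[(ũᵀw)²] = ‖w‖²` for all `w`. -/
theorem covariate_isotropic {Ω : Type*} [MeasurableSpace Ω]
    (μ : Measure Ω) [IsProbabilityMeasure μ]
    (p L : ℕ) (hp : 1 ≤ p) (hL : 1 ≤ L)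
    (v : ℕ → Ω → EuclideanSpace ℝ (Fin p))
    (hmeas : ∀ s, s ≤ L → Measurable (v s))
    (hindep : iIndepFun (m := fun _ : Fin (L + 1) =>
      (inferInstance : MeasurableSpace (EuclideanSpace ℝ (Fin p))))
      (fun s : Fin (L + 1) => v s.val) μ)
    (hmean : ∀ s, s ≤ L → (∫ ω, v s ω ∂μ) = 0)
    (hiso : ∀ s, s ≤ L → Isotropic (v s) μ) :
    (Matrix.of fun a b : CovIdx p L =>
        ∫ ω, covariate L (fun s => v s ω) a * covariate L (fun s => v s ω) b ∂μ)
      = (1 : Matrix (CovIdx p L) (CovIdx p L) ℝ) ∧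
    ∀ w : EuclideanSpace ℝ (CovIdx p L),
      (∫ ω, ⟪covariate L (fun s => v s ω), w⟫ ^ 2 ∂μ) = ‖w‖ ^ 2 := by
  classical
  have hmeas' : ∀ t : Fin (L + 1), Measurable (v t.val) := fun t => hmeas t.val (by omega)
  have hiso' : ∀ t : Fin (L + 1), Isotropic (v t.val) μ := fun t => hiso t.val (by omega)
  have hmean' : ∀ t : Fin (L + 1), (∫ ω, v t.val ω ∂μ) = 0 := fun t => hmean t.val (by omega)
  have key : ∀ a b : CovIdx p L,
      Integrable (fun ω => covariate L (fun s => v s ω) a * covariate L (fun s => v s ω) b) μ ∧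
      (∫ ω, covariate L (fun s => v s ω) a * covariate L (fun s => v s ω) b ∂μ)
        = if a = b then 1 else 0 := by
    intro a b
    have hrw : (fun ω => covariate L (fun s => v s ω) a * covariate L (fun s => v s ω) b)
        = fun ω => ∏ t : Fin (L + 1),
            (baru (v t.val ω) (kIdx a t.val) * baru (v t.val ω) (kIdx b t.val)) := by
      funext ω
      rw [covariate_eq, covariate_eq, ← Finset.prod_mul_distrib]
      exact (Fin.prod_univ_eq_prod_range
        (fun t => baru (v t ω) (kIdx a t) * baru (v t ω) (kIdx b t)) (L + 1)).symm
    have hindF : iIndepFun (m := fun _ : Fin (L + 1) => (inferInstance : MeasurableSpace ℝ))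
        (fun t : Fin (L + 1) => fun ω =>
          baru (v t.val ω) (kIdx a t.val) * baru (v t.val ω) (kIdx b t.val)) μ :=
      hindep.comp
        (fun t : Fin (L + 1) => fun x => baru x (kIdx a t.val) * baru x (kIdx b t.val))
        (fun t => (baru_meas _).mul (baru_meas _))
    have hmeasF : ∀ t : Fin (L + 1), Measurable (fun ω =>
        baru (v t.val ω) (kIdx a t.val) * baru (v t.val ω) (kIdx b t.val)) :=
      fun t => ((baru_meas _).comp (hmeas' t)).mul ((baru_meas _).comp (hmeas' t))
    have hintF : ∀ t : Fin (L + 1), Integrable (fun ω =>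
        baru (v t.val ω) (kIdx a t.val) * baru (v t.val ω) (kIdx b t.val)) μ :=
      fun t => baru_pair_int (hmeas' t) (hiso' t) _ _
    obtain ⟨hInt, hEq⟩ := integral_indep_prod hindF hmeasF hintF Finset.univ
    constructor
    · rw [hrw]
      exact hInt
    · rw [hrw, hEq]
      have hval : ∀ t : Fin (L + 1),
          (∫ ω, baru (v t.val ω) (kIdx a t.val) * baru (v t.val ω) (kIdx b t.val) ∂μ)
            = if kIdx a t.val = kIdx b t.val then 1 else 0 :=
        fun t => baru_pair (hmeas' t) (hiso' t) (hmean' t) _ _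
      rw [Finset.prod_congr rfl (fun t _ => hval t)]
      by_cases hab : a = b
      · subst hab
        simp
      · rw [if_neg hab]
        obtain ⟨t, ht, hne⟩ := kIdx_delta hab
        rw [Fin.prod_univ_eq_prod_range (fun t => if kIdx a t = kIdx b t then (1:ℝ) else 0)]
        exact Finset.prod_eq_zero ht (by simp [hne])
  constructor
  · ext a b
    simp only [Matrix.of_apply, Matrix.one_apply]
    exact (key a b).2
  · intro w
    have hinner : ∀ ω, ⟪covariate L (fun s => v s ω), w⟫ ^ 2
        = ∑ a : CovIdx p L, ∑ b : CovIdx p L,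
            (covariate L (fun s => v s ω) a * w a) * (covariate L (fun s => v s ω) b * w b) := by
      intro ω
      rw [sq, ← Finset.sum_mul_sum]
      congr 1 <;>
      · rw [PiLp.inner_apply]
        simp [RCLike.inner_apply, mul_comm]
    have hint2 : ∀ a b : CovIdx p L, Integrable (fun ω =>
        (covariate L (fun s => v s ω) a * w a) * (covariate L (fun s => v s ω) b * w b)) μ := by
      intro a b
      have h := ((key a b).1.const_mul (w a * w b))
      refine h.congr (Filter.Eventually.of_forall fun ω => ?_)
      show w a * w b * (covariate L (fun s => v s ω) a * covariate L (fun s => v s ω) b) = _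
      ring
    calc (∫ ω, ⟪covariate L (fun s => v s ω), w⟫ ^ 2 ∂μ)
        = ∫ ω, ∑ a : CovIdx p L, ∑ b : CovIdx p L,
            (covariate L (fun s => v s ω) a * w a) * (covariate L (fun s => v s ω) b * w b) ∂μ := by
          simp_rw [hinner]
      _ = ∑ a : CovIdx p L, ∑ b : CovIdx p L, ∫ ω,
            (covariate L (fun s => v s ω) a * w a) * (covariate L (fun s => v s ω) b * w b) ∂μ := by
          rw [integral_finset_sum _ (fun a _ => integrable_finset_sum _ fun b _ => hint2 a b)]
          exact Finset.sum_congr rfl fun a _ => integral_finset_sum _ fun b _ => hint2 a b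
      _ = ∑ a : CovIdx p L, ∑ b : CovIdx p L, (w a * w b) * if a = b then 1 else 0 := by
          refine Finset.sum_congr rfl fun a _ => Finset.sum_congr rfl fun b _ => ?_
          rw [← (key a b).2, ← integral_const_mul]
          congr 1
          funext ω
          ring
      _ = ∑ a : CovIdx p L, w a * w a := by
          refine Finset.sum_congr rfl fun a _ => ?_
          rw [Finset.sum_eq_single a (fun b _ hb => by simp [Ne.symm hb]) (by simp)]
          simp
      _ = ‖w‖ ^ 2 := by
          rw [← real_inner_self_eq_norm_sq, PiLp.inner_apply]
          simp [RCLike.inner_apply, sq]
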